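/- Let W, X, Y be finite types, C^W := W → ZMod 2, C^X := X → ZMod 2, C^Y := Y → ZMod 2, and let d0 : C^W → C^X and d1 : C^X → C^Y be ZMod 2-linear maps with d1 ∘ d0 = 0. Let S : C^X → ℝ, b ∈ C^Y, and a0 ∈ C^X with d1 a0 = b, and assume the fiber over b is exactly the coset a0 + range d0, i.e. for every a ∈ C^X, d1 a = b holds if and only if there exists v ∈ C^W with a = a0 + d0 v. Let x ∈ C^W and m ∈ C^X (a twisted error) be such that for every v ∈ C^W the real number S(a0 + d0 v + d0 x) − S(a0 + d0 v) − S(a0 + d0 x) + S(a0) − (⟨m, d0 v⟩.val : ℝ)/2 is an integer. Then for every charge configuration c ∈ C^X, Z_S[b, c] = Complex.exp(2 π Complex.I * ((S(a0 + d0 x) − S(a0)) + (⟨c, d0 x⟩.val : ℝ)/2 + (⟨m, a0⟩.val : ℝ)/2)) · Z_S[b, c + m]; in particular Z_S[b, c + m] and Z_S[b, c] have equal absolute value. -/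

import Mathlib

open Finset

/-- The pairing `⟨c, a⟩ := Σ_x c x * a x` over `ZMod 2`. -/
def pairing {X : Type*} [Fintype X] (c a : X → ZMod 2) : ZMod 2 :=
  ∑ x, c x * a x

/-- The path integral `Z_S[b, c]` with action `S`, flux configuration `b` and charge
configuration `c`. -/
noncomputable def pathIntegral {X Y : Type*} [Fintype X] [Fintype Y]
    [DecidableEq X] [DecidableEq Y]
    (d1 : (X → ZMod 2) →ₗ[ZMod 2] (Y → ZMod 2))
    (S : (X → ZMod 2) → ℝ) (b : Y → ZMod 2) (c : X → ZMod 2) : ℂ :=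
  ∑ a ∈ Finset.univ.filter (fun a : X → ZMod 2 => d1 a = b),
    Complex.exp (2 * (Real.pi : ℂ) * Complex.I *
      ((S a + ((pairing c a).val : ℝ) / 2 : ℝ) : ℂ))

lemma pairing_add_right {X : Type*} [Fintype X] (c a b : X → ZMod 2) :
    pairing c (a + b) = pairing c a + pairing c b := by
  simp [pairing, mul_add, Finset.sum_add_distrib]

lemma pairing_add_left {X : Type*} [Fintype X] (c m a : X → ZMod 2) :
    pairing (c + m) a = pairing c a + pairing m a := by
  simp [pairing, add_mul, Finset.sum_add_distrib]

lemma zmod2_val_add (u v : ZMod 2) :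
    ∃ k : ℤ, (((u + v).val : ℝ)) = (u.val : ℝ) + (v.val : ℝ) - 2 * k := by
  refine ⟨(((u.val + v.val) / 2 : ℕ) : ℤ), ?_⟩
  have h : (u + v).val = (u.val + v.val) % 2 := ZMod.val_add u v
  have h2 : (u.val + v.val) % 2 + 2 * ((u.val + v.val) / 2) = u.val + v.val :=
    Nat.mod_add_div _ _
  have h2' : (((u.val + v.val) % 2 : ℕ) : ℝ) + 2 * (((u.val + v.val) / 2 : ℕ) : ℝ)
      = (u.val : ℝ) + (v.val : ℝ) := by exact_mod_cast congrArg (fun n : ℕ => (n : ℝ)) h2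
  rw [h, Int.cast_natCast]; linarith [h2']

lemma exp_eq_of_int_diff (A B : ℝ) (N : ℤ) (h : A = B + N) :
    Complex.exp (2 * (Real.pi : ℂ) * Complex.I * (A : ℂ)) =
      Complex.exp (2 * (Real.pi : ℂ) * Complex.I * (B : ℂ)) := by
  have hAB : (A : ℂ) = (B : ℂ) + (N : ℂ) := by exact_mod_cast congrArg (fun r : ℝ => (r : ℂ)) h
  rw [hAB, show 2 * (Real.pi : ℂ) * Complex.I * ((B : ℂ) + (N : ℂ)) =
      2 * (Real.pi : ℂ) * Complex.I * (B : ℂ) + (N : ℤ) * (2 * (Real.pi : ℂ) * Complex.I) by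
      push_cast; ring,
    Complex.exp_add, Complex.exp_int_mul_two_pi_mul_I, mul_one]


/-- Shifting the charge configuration by a twisted error `m` changes the path integral
only by an overall phase; in particular the absolute values agree. -/
theorem pathIntegral_twisted_error_equivalence
    {W X Y : Type*} [Fintype W] [Fintype X] [Fintype Y]
    [DecidableEq W] [DecidableEq X] [DecidableEq Y]
    (d0 : (W → ZMod 2) →ₗ[ZMod 2] (X → ZMod 2))
    (d1 : (X → ZMod 2) →ₗ[ZMod 2] (Y → ZMod 2))
    (hdd : ∀ w : W → ZMod 2, d1 (d0 w) = 0)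
    (S : (X → ZMod 2) → ℝ) (b : Y → ZMod 2) (a0 : X → ZMod 2)
    (ha0 : d1 a0 = b)
    (hfiber : ∀ a : X → ZMod 2, d1 a = b ↔ ∃ v : W → ZMod 2, a = a0 + d0 v)
    (x : W → ZMod 2) (m : X → ZMod 2)
    (hm : ∀ v : W → ZMod 2, ∃ n : ℤ,
      S (a0 + d0 v + d0 x) - S (a0 + d0 v) - S (a0 + d0 x) + S a0
        - ((pairing m (d0 v)).val : ℝ) / 2 = (n : ℝ)) :
    (∀ c : X → ZMod 2,
      pathIntegral d1 S b c =
        Complex.exp (2 * (Real.pi : ℂ) * Complex.I *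
          (((S (a0 + d0 x) - S a0) + ((pairing c (d0 x)).val : ℝ) / 2
            + ((pairing m a0).val : ℝ) / 2 : ℝ) : ℂ)) *
          pathIntegral d1 S b (c + m)) ∧
    (∀ c : X → ZMod 2,
      ‖pathIntegral d1 S b (c + m)‖ =
        ‖pathIntegral d1 S b c‖) := by
  have hxx : d0 x + d0 x = 0 := by
    ext i; exact CharTwo.add_self_eq_zero _
  have main : ∀ c : X → ZMod 2,
      pathIntegral d1 S b c =
        Complex.exp (2 * (Real.pi : ℂ) * Complex.I *
          (((S (a0 + d0 x) - S a0) + ((pairing c (d0 x)).val : ℝ) / 2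
            + ((pairing m a0).val : ℝ) / 2 : ℝ) : ℂ)) *
          pathIntegral d1 S b (c + m) := by
    intro c
    set φ : ℝ := (S (a0 + d0 x) - S a0) + ((pairing c (d0 x)).val : ℝ) / 2
        + ((pairing m a0).val : ℝ) / 2 with hφ
    -- reindex
    have hre : pathIntegral d1 S b c =
        ∑ a ∈ Finset.univ.filter (fun a : X → ZMod 2 => d1 a = b),
          Complex.exp (2 * (Real.pi : ℂ) * Complex.I *
            ((S (a + d0 x) + ((pairing c (a + d0 x)).val : ℝ) / 2 : ℝ) : ℂ)) := by
      rw [pathIntegral]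
      refine Finset.sum_equiv (Equiv.addRight (d0 x)) ?_ ?_
      · intro a
        simp only [Finset.mem_filter, Finset.mem_univ, true_and, Equiv.coe_addRight]
        rw [map_add, hdd, add_zero]
      · intro a _
        simp only [Equiv.coe_addRight]
        congr 2
        rw [add_assoc, hxx, add_zero]
    rw [hre, pathIntegral, Finset.mul_sum]
    refine Finset.sum_congr rfl ?_
    intro a ha
    simp only [Finset.mem_filter, Finset.mem_univ, true_and] at ha
    obtain ⟨v, rfl⟩ := (hfiber a).1 ha
    obtain ⟨n, hn⟩ := hm v
    -- cast corrections
    obtain ⟨k1, hk1⟩ := zmod2_val_add (pairing c (a0 + d0 v)) (pairing c (d0 x))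
    rw [← pairing_add_right] at hk1
    obtain ⟨k2, hk2⟩ := zmod2_val_add (pairing c (a0 + d0 v)) (pairing m (a0 + d0 v))
    rw [← pairing_add_left] at hk2
    obtain ⟨k3, hk3⟩ := zmod2_val_add (pairing m a0) (pairing m (d0 v))
    rw [← pairing_add_right] at hk3
    rw [← Complex.exp_add,
      show 2 * (Real.pi : ℂ) * Complex.I * ((φ : ℝ) : ℂ) +
          2 * (Real.pi : ℂ) * Complex.I *
            ((S (a0 + d0 v) + ((pairing (c + m) (a0 + d0 v)).val : ℝ) / 2 : ℝ) : ℂ) =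
        2 * (Real.pi : ℂ) * Complex.I *
          ((φ + (S (a0 + d0 v) + ((pairing (c + m) (a0 + d0 v)).val : ℝ) / 2) : ℝ) : ℂ) by
        push_cast; ring]
    refine exp_eq_of_int_diff _ _ (n - k1 + k2 + k3 - ((pairing m a0).val : ℤ)) ?_
    rw [hφ]
    push_cast
    linarith [hn, hk1, hk2, hk3]
  refine ⟨main, fun c => ?_⟩
  rw [main c, norm_mul]
  have : ‖Complex.exp (2 * (Real.pi : ℂ) * Complex.I *
      (((S (a0 + d0 x) - S a0) + ((pairing c (d0 x)).val : ℝ) / 2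
        + ((pairing m a0).val : ℝ) / 2 : ℝ) : ℂ))‖ = 1 := by
    rw [Complex.norm_exp]
    simp [Complex.mul_re, Complex.mul_im]
  rw [this, one_mul]
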